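/- Under the squigonometric hypotheses, S is monotone increasing on [0,T], C is monotone decreasing on [0,T], 0 ≤ C(t) ≤ 1 and 0 ≤ S(t) ≤ 1 for all t ∈ [0,T], and S(T) = 1. -/
import Mathlib

private lemma rpow_eq_one_base {x p : ℝ} (hx : 0 ≤ x) (hp : 0 < p)
    (h : x ^ p = 1) : x = 1 := by
  rcases lt_trichotomy x 1 with h1 | h1 | h1
  · have := Real.rpow_lt_one hx h1 hp
    linarith
  · exact h1
  · have : (1:ℝ) < x ^ p :=
      (Real.one_lt_rpow_iff_of_pos (lt_trans one_pos h1)).mpr (Or.inl ⟨h1, hp⟩)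
    linarith

private lemma rpow_le_one_base {x p : ℝ} (hx : 0 ≤ x) (hp : 0 < p)
    (h : x ^ p ≤ 1) : x ≤ 1 := by
  by_contra h1
  push_neg at h1
  have : (1:ℝ) < x ^ p :=
    (Real.one_lt_rpow_iff_of_pos (lt_trans one_pos h1)).mpr (Or.inl ⟨h1, hp⟩)
  linarith

/-- Under the squigonometric hypotheses: `S` is monotone increasing on `[0,T]`,
`C` is monotone decreasing on `[0,T]`, both stay in `[0,1]` there, and `S T = 1`. -/
theorem squigonometric_monotone
    (p T : ℝ) (C S : ℝ → ℝ)
    (hp : 1 ≤ p) (hT : 0 < T)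
    (hCdiff : Differentiable ℝ C) (hSdiff : Differentiable ℝ S)
    (hC' : ∀ t ∈ Set.Icc (0 : ℝ) T, deriv C t = -(S t ^ (p - 1)))
    (hS' : ∀ t ∈ Set.Icc (0 : ℝ) T, deriv S t = C t ^ (p - 1))
    (hCnn : ∀ t ∈ Set.Icc (0 : ℝ) T, 0 ≤ C t)
    (hSnn : ∀ t ∈ Set.Icc (0 : ℝ) T, 0 ≤ S t)
    (hC0 : C 0 = 1) (hS0 : S 0 = 0) (hCT : C T = 0) :
    MonotoneOn S (Set.Icc (0 : ℝ) T) ∧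
    AntitoneOn C (Set.Icc (0 : ℝ) T) ∧
    (∀ t ∈ Set.Icc (0 : ℝ) T, 0 ≤ C t ∧ C t ≤ 1 ∧ 0 ≤ S t ∧ S t ≤ 1) ∧
    S T = 1 := by
  have hp0 : (0:ℝ) < p := lt_of_lt_of_le one_pos hp
  have hconv : Convex ℝ (Set.Icc (0:ℝ) T) := convex_Icc 0 T
  have hint : interior (Set.Icc (0:ℝ) T) = Set.Ioo 0 T := interior_Icc
  have hsub : Set.Ioo (0:ℝ) T ⊆ Set.Icc 0 T := Set.Ioo_subset_Icc_self
  -- monotonicity of S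
  have hSmono : MonotoneOn S (Set.Icc (0:ℝ) T) := by
    apply monotoneOn_of_deriv_nonneg hconv hSdiff.continuous.continuousOn
      (hSdiff.differentiableOn.mono (hint ▸ hsub))
    intro t ht
    rw [hint] at ht
    rw [hS' t (hsub ht)]
    exact Real.rpow_nonneg (hCnn t (hsub ht)) _
  have hCanti : AntitoneOn C (Set.Icc (0:ℝ) T) := by
    apply antitoneOn_of_deriv_nonpos hconv hCdiff.continuous.continuousOn
      (hCdiff.differentiableOn.mono (hint ▸ hsub))
    intro t ht
    rw [hint] at ht
    rw [hC' t (hsub ht)]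
    exact neg_nonpos.mpr (Real.rpow_nonneg (hSnn t (hsub ht)) _)
  -- the Pythagorean-like identity
  set F : ℝ → ℝ := fun t => C t ^ p + S t ^ p with hF
  have hFderiv : ∀ t, HasDerivAt F
      (deriv C t * p * C t ^ (p-1) + deriv S t * p * S t ^ (p-1)) t := by
    intro t
    exact ((hCdiff t).hasDerivAt.rpow_const (Or.inr hp)).add
      ((hSdiff t).hasDerivAt.rpow_const (Or.inr hp))
  have hFd : Differentiable ℝ F := fun t => (hFderiv t).differentiableAt
  have hFzero : ∀ t ∈ Set.Ioo (0:ℝ) T, deriv F t = 0 := by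
    intro t ht
    rw [(hFderiv t).deriv, hC' t (hsub ht), hS' t (hsub ht)]
    ring
  have hFmono : MonotoneOn F (Set.Icc (0:ℝ) T) := by
    apply monotoneOn_of_deriv_nonneg hconv hFd.continuous.continuousOn
      (hFd.differentiableOn.mono (hint ▸ hsub))
    intro t ht; rw [hint] at ht; rw [hFzero t ht]
  have hFanti : AntitoneOn F (Set.Icc (0:ℝ) T) := by
    apply antitoneOn_of_deriv_nonpos hconv hFd.continuous.continuousOn
      (hFd.differentiableOn.mono (hint ▸ hsub))
    intro t ht; rw [hint] at ht; rw [hFzero t ht]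
  have h0mem : (0:ℝ) ∈ Set.Icc (0:ℝ) T := ⟨le_refl 0, hT.le⟩
  have hTmem : T ∈ Set.Icc (0:ℝ) T := ⟨hT.le, le_refl T⟩
  have hF0 : F 0 = 1 := by
    simp only [hF, hC0, hS0, Real.one_rpow, Real.zero_rpow (ne_of_gt hp0), add_zero]
  have hFconst : ∀ t ∈ Set.Icc (0:ℝ) T, F t = 1 := by
    intro t ht
    have h1 := hFmono h0mem ht ht.1
    have h2 := hFanti h0mem ht ht.1
    rw [hF0] at h1 h2
    linarith
  have hST : S T = 1 := by
    have := hFconst T hTmem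
    simp only [hF, hCT, Real.zero_rpow (ne_of_gt hp0), zero_add] at this
    exact rpow_eq_one_base (hSnn T hTmem) hp0 this
  refine ⟨hSmono, hCanti, ?_, hST⟩
  intro t ht
  refine ⟨hCnn t ht, ?_, hSnn t ht, ?_⟩
  · have := hCanti h0mem ht ht.1
    rw [hC0] at this; exact this
  · have hc := hFconst t ht
    have hSp : S t ^ p ≤ 1 := by
      have : 0 ≤ C t ^ p := Real.rpow_nonneg (hCnn t ht) _
      simp only [hF] at hc; linarith
    exact rpow_le_one_base (hSnn t ht) hp0 hSp
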